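/- Let p ≤ r, s ∈ ℕ, and let α_1, …, α_p ∈ ℕ^r be linearly independent over ℚ. Define Φ : ℝ^r × ℝ^s → ℝ^p × ℝ^s by Φ(u, v) = ((u^{α_1}, …, u^{α_p}), v). Call a pair (T, ε), where T is a subset of {1, …, r} with exactly r − p elements and ε : T → {−1, 1}, admissible if the restrictions of α_1, …, α_p to the coordinates outside T are linearly independent over ℚ. Then the image of the closed cube satisfies: Φ([−1,1]^{r+s}) = ⋃_{(T,ε) admissible} Φ({(u, v) ∈ [−1,1]^{r+s} : u_i = ε(i) for all i ∈ T}). (Image of a real monomial mapping: the image of the cube is covered by the images of the faces obtained by setting r − p of the u-coordinates equal to ±1, subject to the generic-rank condition.) -/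

import Mathlib

open Finset

section MonCubeAux

variable {p r : ℕ} {A : Fin p → Fin r → ℚ}


variable {p r : ℕ} {A : Fin p → Fin r → ℚ}

private lemma col_span_finrank (hA : LinearIndependent ℚ A) :
    Module.finrank ℚ (Submodule.span ℚ (Set.range fun i : Fin r => fun j => A j i)) = p := by
  have h1 : (Matrix.of A).rank = Fintype.card (Fin p) := hA.rank_matrix
  have h2 := (Matrix.of A).rank_eq_finrank_span_cols
  rw [h1, Fintype.card_fin] at h2
  exact h2.symm

private def Pc (A : Fin p → Fin r → ℚ) (C : Finset (Fin r)) : Prop :=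
  ∀ c : Fin r → ℚ, (∀ i, c i ≠ 0 → i ∈ C) → (∀ j, ∑ i, c i * A j i = 0) → c = 0

private lemma ext_step (hA : LinearIndependent ℚ A) {F : Finset (Fin r)}
    (hP : Pc A F) (hcard : F.card < p) :
    ∃ i ∉ F, Pc A (insert i F) := by
  classical
  by_contra hno
  push_neg at hno
  set col : Fin r → (Fin p → ℚ) := fun i => fun j => A j i with hcol
  set W : Submodule ℚ (Fin p → ℚ) := Submodule.span ℚ (col '' ↑F) with hW
  have hall : ∀ i, col i ∈ W := by
    intro i
    by_cases hiF : i ∈ F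
    · exact Submodule.subset_span ⟨i, hiF, rfl⟩
    · obtain ⟨c, hsupp, hrel, hc0⟩ := by
        have := hno i hiF
        rw [Pc] at this
        push_neg at this
        exact this
      have hci : c i ≠ 0 := by
        intro h
        apply hc0
        refine hP c ?_ hrel
        intro i' hi'
        rcases Finset.mem_insert.1 (hsupp i' hi') with h' | h'
        · exact absurd (h' ▸ h) hi'
        · exact h'
      -- Σ_{i' ∈ insert i F} c i' • col i' = 0
      have hsum : ∑ i' ∈ insert i F, c i' • col i' = 0 := by
        have h1 : ∑ i', c i' • col i' = ∑ i' ∈ insert i F, c i' • col i' := by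
          refine (Finset.sum_subset (Finset.subset_univ _) ?_).symm
          intro i' _ hi'
          by_cases h : c i' = 0
          · simp [h]
          · exact absurd (hsupp i' h) hi'
        rw [← h1]
        funext j
        have := hrel j
        simp only [Finset.sum_apply, Pi.smul_apply, smul_eq_mul, Pi.zero_apply]
        simp only [hcol]
        exact this
      rw [Finset.sum_insert hiF] at hsum
      have heq : c i • col i = -∑ i' ∈ F, c i' • col i' :=
        eq_neg_of_add_eq_zero_left hsum
      have hmem : c i • col i ∈ W := by
        rw [heq]
        exact Submodule.neg_mem _ (Submodule.sum_mem _ fun i' hi' =>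
          Submodule.smul_mem _ _ (Submodule.subset_span ⟨i', hi', rfl⟩))
      have := Submodule.smul_mem W (c i)⁻¹ hmem
      rwa [smul_smul, inv_mul_cancel₀ hci, one_smul] at this
  have htop : Submodule.span ℚ (Set.range col) ≤ W :=
    Submodule.span_le.2 (Set.range_subset_iff.2 hall)
  have h1 : p ≤ Module.finrank ℚ W := by
    have h0 := Submodule.finrank_mono htop
    replace h0 : Module.finrank ℚ (Submodule.span ℚ (Set.range fun i : Fin r => fun j => A j i)) ≤ Module.finrank ℚ W := h0
    rwa [col_span_finrank hA] at h0
  have h2 : Module.finrank ℚ W ≤ F.card := by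
    have himg : col '' ↑F = ((F.image col : Finset (Fin p → ℚ)) : Set (Fin p → ℚ)) := by
      simp [Finset.coe_image]
    calc Module.finrank ℚ W ≤ (F.image col).card := by
          rw [hW, himg]; exact finrank_span_finset_le_card _
      _ ≤ F.card := Finset.card_image_le
  omega

private lemma ext_rec (hA : LinearIndependent ℚ A) :
    ∀ n (F : Finset (Fin r)), Pc A F → F.card + n = p →
      ∃ C, F ⊆ C ∧ C.card = p ∧ Pc A C := by
  intro n
  induction n with
  | zero => intro F hP hc; exact ⟨F, Finset.Subset.refl F, by omega, hP⟩
  | succ n ih =>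
    intro F hP hc
    obtain ⟨i, hiF, hPi⟩ := ext_step hA hP (by omega)
    obtain ⟨C, hsub, hcard, hPC⟩ := ih (insert i F) hPi (by rw [Finset.card_insert_of_notMem hiF]; omega)
    exact ⟨C, (Finset.subset_insert i F).trans hsub, hcard, hPC⟩

private lemma li_of_P {C : Finset (Fin r)} (hP : Pc A C) :
    LinearIndependent ℚ (fun i : C => fun j => A j (i : Fin r)) := by
  classical
  rw [Fintype.linearIndependent_iff]
  intro g hg
  set c : Fin r → ℚ := fun i => if h : i ∈ C then g ⟨i, h⟩ else 0 with hc
  have hsupp : ∀ i, c i ≠ 0 → i ∈ C := by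
    intro i hi
    by_contra h
    simp [hc, h] at hi
  have hrel : ∀ j, ∑ i, c i * A j i = 0 := by
    intro j
    have h1 : ∑ i, c i * A j i = ∑ i ∈ C, c i * A j i := by
      refine (Finset.sum_subset (Finset.subset_univ C) ?_).symm
      intro i _ hiC
      simp [hc, hiC]
    rw [h1, ← Finset.sum_attach C fun i => c i * A j i]
    have := congrFun hg j
    simp only [Finset.sum_apply, Pi.smul_apply, smul_eq_mul, Pi.zero_apply] at this
    rw [← this]
    apply Finset.sum_congr rfl
    intro i _
    simp [hc, i.2]
  have hc0 := hP c hsupp hrel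
  intro i
  have : c (i : Fin r) = 0 := by rw [hc0]; rfl
  simpa [hc, i.2] using this

private lemma card_le_of_P {C : Finset (Fin r)} (hP : Pc A C) : C.card ≤ p := by
  have h := (li_of_P hP).fintype_card_le_finrank
  simpa [Module.finrank_fintype_fun_eq_card] using h



private lemma rows_li (Q : Fin r → Prop) [DecidablePred Q] [Fintype {i // Q i}]
    (hcard : Fintype.card {i // Q i} = p)
    (hP : ∀ c : Fin r → ℚ, (∀ i, c i ≠ 0 → Q i) → (∀ j, ∑ i, c i * A j i = 0) → c = 0) :
    LinearIndependent ℚ (fun j : Fin p => fun i : {i : Fin r // Q i} => A j (i : Fin r)) := by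
  classical
  -- the column linear map
  set ψ : ({i : Fin r // Q i} → ℚ) →ₗ[ℚ] (Fin p → ℚ) :=
    { toFun := fun c => fun j => ∑ i : {i // Q i}, c i * A j (i : Fin r)
      map_add' := by
        intro x y; funext j
        simp [add_mul, Finset.sum_add_distrib]
      map_smul' := by
        intro a x; funext j
        simp [Finset.mul_sum, mul_assoc] } with hψ
  have hinj : Function.Injective ψ := by
    rw [← LinearMap.ker_eq_bot, LinearMap.ker_eq_bot']
    intro g hg
    set c : Fin r → ℚ := fun i => if h : Q i then g ⟨i, h⟩ else 0 with hc
    have hsupp : ∀ i, c i ≠ 0 → Q i := by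
      intro i hi; by_contra h; simp [hc, h] at hi
    have hrel : ∀ j, ∑ i, c i * A j i = 0 := by
      intro j
      have h1 : ∑ i, c i * A j i = ∑ i ∈ Finset.univ.filter Q, c i * A j i := by
        refine (Finset.sum_subset (Finset.filter_subset _ _) ?_).symm
        intro i _ hiQ
        simp only [Finset.mem_filter, Finset.mem_univ, true_and] at hiQ
        simp [hc, hiQ]
      rw [h1, ← Finset.sum_subtype_eq_sum_filter, Finset.subtype_univ]
      have := congrFun hg j
      simp only [hψ, LinearMap.coe_mk, AddHom.coe_mk, Pi.zero_apply] at this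
      rw [← this]
      apply Finset.sum_congr rfl
      intro i _
      simp [hc, i.2]
    have hc0 := hP c hsupp hrel
    funext i
    have : c (i : Fin r) = 0 := by rw [hc0]; rfl
    simpa [hc, i.2] using this
  have hsurj : Function.Surjective ψ := by
    have hfr : Module.finrank ℚ ({i : Fin r // Q i} → ℚ) = Module.finrank ℚ (Fin p → ℚ) := by
      simp [Module.finrank_fintype_fun_eq_card, hcard]
    exact (LinearMap.injective_iff_surjective_of_finrank_eq_finrank hfr).1 hinj
  rw [Fintype.linearIndependent_iff]
  intro d hd j₀
  obtain ⟨c, hcψ⟩ := hsurj (Pi.single j₀ 1)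
  have hrow : ∀ i : {i // Q i}, ∑ j, d j * A j (i : Fin r) = 0 := by
    intro i
    have := congrFun hd i
    simpa [Finset.sum_apply] using this
  have key : ∑ j, d j * ψ c j = 0 := by
    have : ∀ j, d j * ψ c j = ∑ i : {i // Q i}, d j * (c i * A j (i : Fin r)) := by
      intro j
      simp [hψ, Finset.mul_sum]
    rw [Finset.sum_congr rfl fun j _ => this j, Finset.sum_comm]
    refine Finset.sum_eq_zero fun i _ => ?_
    calc ∑ j, d j * (c i * A j (i : Fin r)) = c i * ∑ j, d j * A j (i : Fin r) := by
          rw [Finset.mul_sum]; exact Finset.sum_congr rfl fun j _ => by ring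
      _ = 0 := by rw [hrow i, mul_zero]
  rw [hcψ] at key
  have : ∑ j, d j * (Pi.single j₀ 1 : Fin p → ℚ) j = d j₀ := by
    rw [Finset.sum_eq_single j₀]
    · simp
    · intro b _ hb; simp [Pi.single_eq_of_ne hb]
    · intro h; exact absurd (Finset.mem_univ j₀) h
  rw [this] at key
  exact key
private lemma exists_face (α : Fin p → Fin r → ℕ)
    (hα : LinearIndependent ℚ fun j : Fin p => fun i : Fin r => (α j i : ℚ))
    (u : Fin r → ℝ) (hu : ∀ i, |u i| ≤ 1) :
    ∃ u₀ : Fin r → ℝ, (∀ i, |u₀ i| ≤ 1) ∧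
      (∀ j, ∏ i, u₀ i ^ α j i = ∏ i, u i ^ α j i) ∧
      Pc (fun j i => (α j i : ℚ)) (Finset.univ.filter fun i => |u₀ i| < 1) := by
  classical
  set f : (Fin r → ℝ) → Fin p → ℝ := fun w j => ∏ i, w i ^ α j i with hf
  set K : Set (Fin r → ℝ) := {w | (∀ i, |w i| ≤ 1) ∧ ∀ j, f w j = f u j} with hKdef
  have hfc : ∀ j, Continuous fun w : Fin r → ℝ => f w j := fun j =>
    continuous_finset_prod _ fun i _ => (continuous_apply i).pow _
  have hK : IsCompact K := by
    have h1 : K = (Set.univ.pi fun _ : Fin r => Set.Icc (-1:ℝ) 1) ∩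
        {w | ∀ j, f w j = f u j} := by
      ext w
      constructor
      · rintro ⟨hb, hfj⟩
        exact ⟨fun i _ => Set.mem_Icc.2 ⟨(abs_le.1 (hb i)).1, (abs_le.1 (hb i)).2⟩, hfj⟩
      · rintro ⟨hb, hfj⟩
        exact ⟨fun i => abs_le.2 ⟨(Set.mem_Icc.1 (hb i (Set.mem_univ i))).1,
          (Set.mem_Icc.1 (hb i (Set.mem_univ i))).2⟩, hfj⟩
    rw [h1]
    refine IsCompact.inter_right (isCompact_univ_pi fun i => isCompact_Icc) ?_
    have h2 : {w : Fin r → ℝ | ∀ j, f w j = f u j} = ⋂ j, {w | f w j = f u j} := by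
      ext w; simp
    rw [h2]
    exact isClosed_iInter fun j => isClosed_eq (hfc j) continuous_const
  have huK : u ∈ K := ⟨hu, fun j => rfl⟩
  set g : (Fin r → ℝ) → ℝ := fun w => ∑ i, |w i| with hg
  have hgc : Continuous g := continuous_finset_sum _ fun i _ => (continuous_apply i).abs
  obtain ⟨u₀, hu₀K, hmax⟩ := hK.exists_isMaxOn ⟨u, huK⟩ hgc.continuousOn
  obtain ⟨hu₀b, hu₀f⟩ := hu₀K
  refine ⟨u₀, hu₀b, hu₀f, ?_⟩
  -- the key independence property
  intro c hsupp hrel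
  by_contra hc
  have hex0 : ∃ i, c i ≠ 0 := by
    contrapose! hc
    funext i; exact hc i
  have hrelR : ∀ j, ∑ i, (c i : ℝ) * (α j i : ℝ) = 0 := by
    intro j
    have h0 : ((∑ i, c i * ((α j i : ℕ) : ℚ) : ℚ) : ℝ) = 0 := by rw [hrel j]; norm_num
    push_cast at h0
    exact h0
  have hsupp' : ∀ i, c i ≠ 0 → |u₀ i| < 1 := by
    intro i hi
    have := hsupp i hi
    simpa using this
  by_cases hex : ∃ i, c i ≠ 0 ∧ u₀ i ≠ 0
  · -- scaling perturbation
    obtain ⟨i₁, hci₁, hui₁⟩ := hex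
    set S : Finset (Fin r) := Finset.univ.filter (fun i => c i ≠ 0 ∧ u₀ i ≠ 0) with hS
    have hi₁S : i₁ ∈ S := by simp [hS, hci₁, hui₁]
    set t : ℝ := S.inf' ⟨i₁, hi₁S⟩ (fun i => -Real.log |u₀ i| / |(c i : ℝ)|) with ht
    have htpos : 0 < t := by
      rw [ht]; refine (Finset.lt_inf'_iff _).2 ?_
      intro i hiS
      simp only [hS, Finset.mem_filter, Finset.mem_univ, true_and] at hiS
      obtain ⟨hci, hui⟩ := hiS
      have h1 : 0 < |u₀ i| := abs_pos.2 hui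
      have h2 : |u₀ i| < 1 := hsupp' i hci
      have h3 : Real.log |u₀ i| < 0 := Real.log_neg h1 h2
      have h4 : (0:ℝ) < |(c i : ℝ)| := abs_pos.2 (by exact_mod_cast hci)
      exact div_pos (by linarith) h4
    have hmem : ∀ t' : ℝ, |t'| ≤ t →
        (fun i => u₀ i * Real.exp (t' * (c i : ℝ))) ∈ K := by
      intro t' ht'
      constructor
      · intro i
        rw [abs_mul, Real.abs_exp]
        by_cases hci : c i = 0
        · simpa [hci] using hu₀b i
        by_cases hui : u₀ i = 0
        · simp [hui]
        have hiS : i ∈ S := by simp [hS, hci, hui]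
        have h1 : 0 < |u₀ i| := abs_pos.2 hui
        have h4 : (0:ℝ) < |(c i : ℝ)| := abs_pos.2 (by exact_mod_cast hci)
        have h5 : t ≤ -Real.log |u₀ i| / |(c i : ℝ)| := Finset.inf'_le _ hiS
        have h6 : t' * (c i : ℝ) ≤ -Real.log |u₀ i| := by
          calc t' * (c i : ℝ) ≤ |t' * (c i : ℝ)| := le_abs_self _
            _ = |t'| * |(c i : ℝ)| := abs_mul _ _
            _ ≤ t * |(c i : ℝ)| := by
                exact mul_le_mul_of_nonneg_right ht' (le_of_lt h4)
            _ ≤ (-Real.log |u₀ i| / |(c i : ℝ)|) * |(c i : ℝ)| := by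
                exact mul_le_mul_of_nonneg_right h5 (le_of_lt h4)
            _ = -Real.log |u₀ i| := by field_simp
        have h7 : Real.exp (t' * (c i : ℝ)) ≤ |u₀ i|⁻¹ := by
          rw [← Real.exp_log h1, ← Real.exp_neg]
          exact Real.exp_le_exp.2 h6
        calc |u₀ i| * Real.exp (t' * (c i : ℝ)) ≤ |u₀ i| * |u₀ i|⁻¹ :=
              mul_le_mul_of_nonneg_left h7 (abs_nonneg _)
          _ = 1 := mul_inv_cancel₀ (ne_of_gt h1)
      · intro j
        rw [← hu₀f j]
        simp only [hf, mul_pow, Finset.prod_mul_distrib]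
        have h8 : ∏ i, Real.exp (t' * (c i : ℝ)) ^ α j i = 1 := by
          have h9 : ∀ i, Real.exp (t' * (c i : ℝ)) ^ α j i
              = Real.exp ((α j i : ℝ) * (t' * (c i : ℝ))) := fun i =>
            (Real.exp_nat_mul _ _).symm
          rw [Finset.prod_congr rfl fun i _ => h9 i, ← Real.exp_sum]
          have h10 : ∑ i, (α j i : ℝ) * (t' * (c i : ℝ))
              = t' * ∑ i, (c i : ℝ) * (α j i : ℝ) := by
            rw [Finset.mul_sum]
            exact Finset.sum_congr rfl fun i _ => by ring
          rw [h10, hrelR j, mul_zero, Real.exp_zero]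
        rw [h8, mul_one]
    have hwP := hmem t (by rw [abs_of_pos htpos])
    have hwM := hmem (-t) (by rw [abs_neg, abs_of_pos htpos])
    have hleP : g (fun i => u₀ i * Real.exp (t * (c i : ℝ))) ≤ g u₀ := hmax hwP
    have hleM : g (fun i => u₀ i * Real.exp (-t * (c i : ℝ))) ≤ g u₀ := hmax hwM
    have hsumlt : ∑ i, (|u₀ i| + |u₀ i|) <
        ∑ i, (|u₀ i * Real.exp (t * (c i : ℝ))| + |u₀ i * Real.exp (-t * (c i : ℝ))|) := by
      apply Finset.sum_lt_sum
      · intro i _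
        rw [abs_mul, abs_mul, Real.abs_exp, Real.abs_exp]
        have e1 := Real.add_one_le_exp (t * (c i : ℝ))
        have e2 := Real.add_one_le_exp (-t * (c i : ℝ))
        nlinarith [abs_nonneg (u₀ i)]
      · refine ⟨i₁, Finset.mem_univ _, ?_⟩
        rw [abs_mul, abs_mul, Real.abs_exp, Real.abs_exp]
        have hx : t * (c i₁ : ℝ) ≠ 0 :=
          mul_ne_zero (ne_of_gt htpos) (by exact_mod_cast hci₁)
        have e1 := Real.add_one_lt_exp hx
        have e2 := Real.add_one_le_exp (-t * (c i₁ : ℝ))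
        have h1 : 0 < |u₀ i₁| := abs_pos.2 hui₁
        nlinarith
    have hA1 : ∑ i, (|u₀ i| + |u₀ i|) = g u₀ + g u₀ := by
      rw [hg, Finset.sum_add_distrib]
    have hA2 : ∑ i, (|u₀ i * Real.exp (t * (c i : ℝ))| + |u₀ i * Real.exp (-t * (c i : ℝ))|)
        = g (fun i => u₀ i * Real.exp (t * (c i : ℝ)))
          + g (fun i => u₀ i * Real.exp (-t * (c i : ℝ))) := by
      rw [hg, Finset.sum_add_distrib]
    rw [hA1, hA2] at hsumlt
    linarith
  · -- a zero coordinate can be set to 1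
    push_neg at hex
    obtain ⟨i₀, hci₀⟩ := hex0
    have hu₀i₀ : u₀ i₀ = 0 := hex i₀ hci₀
    set w : Fin r → ℝ := Function.update u₀ i₀ 1 with hw
    have hwK : w ∈ K := by
      constructor
      · intro i
        by_cases h : i = i₀
        · subst h; simp [hw]
        · rw [hw, Function.update_of_ne h]
          exact hu₀b i
      · intro j
        rw [← hu₀f j]
        by_cases hj0 : α j i₀ = 0
        · refine Finset.prod_congr rfl fun i _ => ?_
          by_cases h : i = i₀
          · subst h; rw [hj0]; simp
          · rw [hw, Function.update_of_ne h]
        · have hex1 : ∃ i₂, i₂ ≠ i₀ ∧ c i₂ ≠ 0 ∧ α j i₂ ≠ 0 := by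
            by_contra hno
            push_neg at hno
            have h0 := hrel j
            rw [Finset.sum_eq_single i₀] at h0
            · refine absurd h0 (mul_ne_zero hci₀ ?_)
              simpa using (Nat.cast_ne_zero (R := ℚ)).2 hj0
            · intro b _ hb
              by_cases hcb : c b = 0
              · simp [hcb]
              · simp only []
                rw [hno b hb hcb]; simp
            · intro h; exact absurd (Finset.mem_univ i₀) h
          obtain ⟨i₂, hi₂ne, hci₂, haji₂⟩ := hex1
          have hui₂ : u₀ i₂ = 0 := hex i₂ hci₂
          have hz1 : f w j = 0 := by
            refine Finset.prod_eq_zero (Finset.mem_univ i₂) ?_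
            rw [hw, Function.update_of_ne hi₂ne, hui₂]
            exact zero_pow haji₂
          have hz2 : f u₀ j = 0 := by
            refine Finset.prod_eq_zero (Finset.mem_univ i₂) ?_
            rw [hui₂]
            exact zero_pow haji₂
          rw [hz1, hz2]
    have hgw : g u₀ < g w := by
      rw [hg]
      apply Finset.sum_lt_sum
      · intro i _
        by_cases h : i = i₀
        · subst h; rw [hw, Function.update_self, hu₀i₀]; norm_num
        · rw [hw, Function.update_of_ne h]
      · exact ⟨i₀, Finset.mem_univ _, by
          rw [hw, Function.update_self, hu₀i₀]; norm_num⟩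
    exact absurd (hmax hwK) (not_le.2 hgw)

end MonCubeAux

/-- Image of a real monomial mapping: the image of the closed cube under
`Φ(u,v) = ((u^{α_1},…,u^{α_p}), v)` is covered by the images of the faces obtained by
setting `r − p` of the `u`-coordinates equal to `±1`, subject to the condition that the
restrictions of `α_1,…,α_p` to the remaining coordinates stay linearly independent over
`ℚ`. -/
theorem monomial_image_of_cube (p r s : ℕ) (hpr : p ≤ r)
    (α : Fin p → Fin r → ℕ)
    (hα : LinearIndependent ℚ fun j : Fin p => fun i : Fin r => (α j i : ℚ)) :
    (fun q : (Fin r → ℝ) × (Fin s → ℝ) =>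
        ((fun j : Fin p => ∏ i, q.1 i ^ α j i), q.2)) ''
      {q : (Fin r → ℝ) × (Fin s → ℝ) | (∀ i, |q.1 i| ≤ 1) ∧ ∀ k, |q.2 k| ≤ 1}
    = ⋃ (T : Finset (Fin r)) (ε : Fin r → ℝ)
        (_ : T.card = r - p ∧ (∀ i ∈ T, ε i = 1 ∨ ε i = -1) ∧
          LinearIndependent ℚ
            fun j : Fin p => fun i : {i : Fin r // i ∉ T} => (α j i.1 : ℚ)),
        (fun q : (Fin r → ℝ) × (Fin s → ℝ) =>
            ((fun j : Fin p => ∏ i, q.1 i ^ α j i), q.2)) ''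
          ({q : (Fin r → ℝ) × (Fin s → ℝ) | (∀ i, |q.1 i| ≤ 1) ∧ ∀ k, |q.2 k| ≤ 1} ∩
            {q : (Fin r → ℝ) × (Fin s → ℝ) | ∀ i ∈ T, q.1 i = ε i}) := by
  classical
  apply Set.Subset.antisymm
  · rintro _ ⟨⟨u, v⟩, ⟨hu, hv⟩, rfl⟩
    obtain ⟨u₀, hu₀b, hu₀f, hP⟩ := exists_face α hα u hu
    have hcle : (Finset.univ.filter fun i => |u₀ i| < 1).card ≤ p := card_le_of_P hP
    obtain ⟨C, hFC, hCcard, hPC⟩ :=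
      ext_rec hα (p - (Finset.univ.filter fun i => |u₀ i| < 1).card) _ hP (by omega)
    have hTcard : Cᶜ.card = r - p := by
      rw [Finset.card_compl, hCcard, Fintype.card_fin]
    have hsign : ∀ i ∈ Cᶜ, u₀ i = 1 ∨ u₀ i = -1 := by
      intro i hi
      have hiC : i ∉ C := Finset.mem_compl.1 hi
      have hiF : i ∉ (Finset.univ.filter fun i => |u₀ i| < 1) := fun h => hiC (hFC h)
      have h0 : ¬ |u₀ i| < 1 := by
        intro h; exact hiF (by simp [h])
      have h1 : |u₀ i| = 1 := le_antisymm (hu₀b i) (not_lt.1 h0)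
      exact (abs_eq (by norm_num : (0:ℝ) ≤ 1)).1 h1
    have hli : LinearIndependent ℚ
        (fun j : Fin p => fun i : {i : Fin r // i ∉ Cᶜ} => (α j i.1 : ℚ)) := by
      have hcard2 : Fintype.card {i : Fin r // i ∉ Cᶜ} = p := by
        have he : (Finset.univ.filter fun i : Fin r => i ∉ Cᶜ) = C := by
          ext i; simp
        rw [Fintype.card_subtype, he, hCcard]
      refine rows_li (A := fun j i => (α j i : ℚ)) (fun i => i ∉ Cᶜ) hcard2 ?_
      intro c hsuppc hrelc
      refine hPC c (fun i hi => ?_) hrelc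
      have := hsuppc i hi
      simpa using this
    refine Set.mem_iUnion.2 ⟨Cᶜ, Set.mem_iUnion.2 ⟨u₀, Set.mem_iUnion.2
      ⟨⟨hTcard, hsign, hli⟩, ⟨(u₀, v), ⟨⟨hu₀b, hv⟩, fun i _ => rfl⟩, ?_⟩⟩⟩⟩
    simp only [Prod.mk.injEq]
    exact ⟨funext fun j => hu₀f j, trivial⟩
  · intro x hx
    simp only [Set.mem_iUnion] at hx
    obtain ⟨T, ε, _, q, ⟨hq, _⟩, rfl⟩ := hx
    exact ⟨q, hq, rfl⟩
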